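/- Let n ≥ 1 and let 𝒢 be a set of maps from ℝⁿ to itself such that every G ∈ 𝒢 is a bijective isometry that preserves Lebesgue measure, and such that for every G ∈ 𝒢 and every real a with 0 < a < 1 there exists H ∈ 𝒢 with H(a·x) = a·G(x) for all x. Let μ₀ be a 𝒢-invariant probability measure on ℝⁿ, let X₀ have law μ₀, let ε be a standard Gaussian random vector on ℝⁿ independent of X₀, and let 0 < α ≤ 1 and σ > 0. Then the law of α·X₀ + σ·ε is 𝒢-invariant (the paper's Theorem 1: sufficient conditions for the invariance of q₀ to imply the invariance of the diffused marginal qₜ). -/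

import Mathlib

open MeasureTheory ProbabilityTheory Real Filter
open scoped ENNReal Topology

section Auxiliary

lemma lintegral_pi_prod {n : ℕ} (f : Fin n → ℝ → ℝ≥0∞) (hf : ∀ i, Measurable (f i)) :
    ∫⁻ x : Fin n → ℝ, ∏ i, f i (x i) ∂(Measure.pi fun _ => volume) = ∏ i, ∫⁻ t, f i t := by
  induction n with
  | zero => simp [Measure.pi_empty_univ]
  | succ n ih =>
      have hmp := (measurePreserving_piFinSuccAbove (fun _ : Fin (n+1) => (volume : Measure ℝ)) 0).symm
      have hme := (MeasurableEquiv.piFinSuccAbove (fun _ : Fin (n+1) => ℝ) 0).symm.measurableEmbedding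
      rw [← hmp.lintegral_comp_emb hme (fun x => ∏ i, f i (x i))]
      simp_rw [MeasurableEquiv.piFinSuccAbove_symm_apply, Fin.insertNthEquiv,
        Fin.prod_univ_succ, Fin.insertNth_zero]
      simp only [Fin.zero_succAbove, Function.comp_def, Fin.cons_zero, Fin.cons_succ,
        Equiv.coe_fn_mk, cast_eq]
      rw [lintegral_prod_mul (f := f 0) (g := fun y : Fin n → ℝ => ∏ i, f i.succ (y i))
        (hf 0).aemeasurable
        (Finset.measurable_prod _ fun i _ => (hf i.succ).comp (measurable_pi_apply i)).aemeasurable]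
      rw [ih (fun i => f i.succ) (fun i => hf i.succ)]

lemma pi_withDensity {n : ℕ} (f : ℝ → ℝ≥0∞) (hf : Measurable f)
    [SigmaFinite ((volume : Measure ℝ).withDensity f)] :
    (Measure.pi fun _ : Fin n => (volume : Measure ℝ).withDensity f)
      = (Measure.pi fun _ : Fin n => (volume : Measure ℝ)).withDensity
          (fun x => ∏ i, f (x i)) := by
  have hfi : Measurable fun x : Fin n → ℝ => ∏ i, f (x i) :=
    Finset.measurable_prod _ fun i _ => hf.comp (measurable_pi_apply i)
  refine Measure.pi_eq (fun s hs => ?_)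
  rw [withDensity_apply _ (MeasurableSet.univ_pi hs), ← lintegral_indicator (MeasurableSet.univ_pi hs)]
  have : (Set.univ.pi s).indicator (fun x => ∏ i, f (x i))
      = fun x : Fin n → ℝ => ∏ i, (s i).indicator f (x i) := by
    funext x
    by_cases hx : x ∈ Set.univ.pi s
    · rw [Set.indicator_of_mem hx]
      exact Finset.prod_congr rfl fun i _ =>
        (Set.indicator_of_mem (hx i (Set.mem_univ i)) f).symm
    · rw [Set.indicator_of_notMem hx]
      simp only [Set.mem_pi, Set.mem_univ, forall_true_left, not_forall] at hx
      obtain ⟨i, hi⟩ := hx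
      exact (Finset.prod_eq_zero (Finset.mem_univ i) (Set.indicator_of_notMem hi f)).symm
  rw [this, lintegral_pi_prod _ (fun i => hf.indicator (hs i))]
  exact Finset.prod_congr rfl fun i _ => by
    rw [lintegral_indicator (hs i), withDensity_apply _ (hs i)]

lemma map_withDensity_equiv {α β : Type*} [MeasurableSpace α] [MeasurableSpace β]
    (μ : Measure α) (ψ : α ≃ᵐ β) (f : β → ℝ≥0∞) (hf : Measurable f) :
    (μ.withDensity (f ∘ ψ)).map ψ = (μ.map ψ).withDensity f := by
  ext s hs
  rw [Measure.map_apply ψ.measurable hs, withDensity_apply _ (ψ.measurable hs),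
    withDensity_apply _ hs]
  simp only [Function.comp_def]
  exact (setLIntegral_map hs hf ψ.measurable).symm

lemma eq_zero_of_map_add_eq {E : Type*} [NormedAddCommGroup E] [NormedSpace ℝ E]
    [MeasurableSpace E] [BorelSpace E] (μ : Measure E) [IsProbabilityMeasure μ] {v : E}
    (h : μ.map (· + v) = μ) : v = 0 := by
  by_contra hv
  have hvpos : 0 < ‖v‖ := norm_pos_iff.2 hv
  have hk : ∀ k : ℕ, μ.map (· + k • v) = μ := by
    intro k
    induction k with
    | zero => simp
    | succ k ih =>
        have hcomp : (fun x : E => x + (k + 1) • v)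
            = (fun x : E => x + v) ∘ (fun x : E => x + k • v) := by
          funext x
          simp [succ_nsmul, add_assoc]
        rw [hcomp, ← Measure.map_map (measurable_add_const v) (measurable_add_const _), ih, h]
  obtain ⟨m, hm⟩ : ∃ m : ℕ, (1 : ℝ≥0∞) / 2 < μ (Metric.ball (0 : E) m) := by
    have hmono : Monotone fun m : ℕ => Metric.ball (0 : E) m := fun a b hab =>
      Metric.ball_subset_ball (by exact_mod_cast hab)
    have huniv : (⋃ m : ℕ, Metric.ball (0 : E) m) = Set.univ := by
      ext x
      simp only [Set.mem_iUnion, Set.mem_univ, iff_true, Metric.mem_ball, dist_zero_right]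
      obtain ⟨m, hm⟩ := exists_nat_gt ‖x‖
      exact ⟨m, hm⟩
    have := tendsto_measure_iUnion_atTop (μ := μ) hmono
    rw [huniv, measure_univ] at this
    have hlt : (1 : ℝ≥0∞) / 2 < 1 := by norm_num
    exact ((this.eventually_const_lt hlt).exists).imp fun m hm => hm
  set R : ℝ := (m : ℝ)
  obtain ⟨k, hk2⟩ := exists_nat_gt (2 * R / ‖v‖)
  have hk2' : 2 * R < k * ‖v‖ := (div_lt_iff₀ hvpos).mp hk2
  have htrans : μ (Metric.ball (k • v) R) = μ (Metric.ball (0 : E) R) := by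
    have := hk k
    conv_lhs => rw [← this]
    rw [Measure.map_apply (measurable_add_const _) measurableSet_ball]
    congr 1
    ext x
    simp [Metric.mem_ball, dist_eq_norm]
  have hdisj : Disjoint (Metric.ball (0 : E) R) (Metric.ball (k • v) R) := by
    rw [Set.disjoint_left]
    intro x hx hx'
    rw [Metric.mem_ball, dist_zero_right] at hx
    rw [Metric.mem_ball, dist_eq_norm] at hx'
    have hnorm : ‖k • v‖ = k * ‖v‖ := by
      rw [← Nat.cast_smul_eq_nsmul ℝ, norm_smul, Real.norm_natCast]
    have hle' : ‖k • v‖ ≤ ‖x‖ + ‖x - k • v‖ := by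
      calc ‖k • v‖ = ‖x - (x - k • v)‖ := by rw [sub_sub_cancel]
        _ ≤ ‖x‖ + ‖x - k • v‖ := norm_sub_le _ _
    have : (k : ℝ) * ‖v‖ < 2 * R := by
      rw [← hnorm]
      calc ‖k • v‖ ≤ ‖x‖ + ‖x - k • v‖ := hle'
        _ < R + R := add_lt_add hx hx'
        _ = 2 * R := by ring
    linarith
  have hle : μ (Metric.ball (0 : E) R ∪ Metric.ball (k • v) R) ≤ 1 := prob_le_one
  rw [measure_union hdisj measurableSet_ball, htrans] at hle
  exact lt_irrefl (1 : ℝ≥0∞) <| by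
    calc (1 : ℝ≥0∞) = 1 / 2 + 1 / 2 := by
          rw [one_div, ENNReal.inv_two_add_inv_two]
      _ < μ (Metric.ball (0 : E) R) + μ (Metric.ball (0 : E) R) := ENNReal.add_lt_add hm hm
      _ ≤ 1 := hle

end Auxiliary

/-- The standard Gaussian measure on `EuclideanSpace ℝ (Fin n)`: the law of a random vector with
independent standard normal coordinates. -/
noncomputable def stdGaussian (n : ℕ) : Measure (EuclideanSpace ℝ (Fin n)) :=
  (Measure.pi fun _ : Fin n => gaussianReal 0 1).map
    (MeasurableEquiv.toLp 2 (Fin n → ℝ))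

section GaussianInvariance

lemma prod_gaussianPDFReal {n : ℕ} (x : EuclideanSpace ℝ (Fin n)) :
    ∏ i, gaussianPDFReal 0 1 (x i)
      = (Real.sqrt (2 * π))⁻¹ ^ n * Real.exp (-‖x‖ ^ 2 / 2) := by
  have h : ∀ i : Fin n, gaussianPDFReal 0 1 (x i)
      = (Real.sqrt (2 * π))⁻¹ * Real.exp (-(x i) ^ 2 / 2) := by
    intro i
    simp [gaussianPDFReal]
  simp_rw [h]
  rw [Finset.prod_mul_distrib, Finset.prod_const, ← Real.exp_sum, Finset.card_univ,
    Fintype.card_fin]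
  congr 2
  have hnorm : ‖x‖ ^ 2 = ∑ i, (x i) ^ 2 := by
    rw [EuclideanSpace.norm_eq, Real.sq_sqrt (Finset.sum_nonneg fun i _ => sq_nonneg _)]
    simp [sq_abs]
  rw [hnorm]
  simp only [neg_div, Finset.sum_neg_distrib, Finset.sum_div]

noncomputable def stdDensity (n : ℕ) : EuclideanSpace ℝ (Fin n) → ℝ≥0∞ :=
  fun x => ∏ i, gaussianPDF 0 1 (x i)

lemma stdDensity_measurable (n : ℕ) : Measurable (stdDensity n) :=
  Finset.measurable_prod _ fun i _ =>
    (measurable_gaussianPDF 0 1).comp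
      ((measurable_pi_apply i).comp (MeasurableEquiv.toLp 2 (Fin n → ℝ)).symm.measurable)

lemma stdDensity_apply {n : ℕ} (x : EuclideanSpace ℝ (Fin n)) :
    stdDensity n x = ENNReal.ofReal ((Real.sqrt (2 * π))⁻¹ ^ n * Real.exp (-‖x‖ ^ 2 / 2)) := by
  rw [← prod_gaussianPDFReal, stdDensity]
  simp only [gaussianPDF]
  rw [← ENNReal.ofReal_prod_of_nonneg fun i _ => gaussianPDFReal_nonneg 0 1 (x i)]

lemma stdGaussian_eq_withDensity (n : ℕ) :
    stdGaussian n = (volume : Measure (EuclideanSpace ℝ (Fin n))).withDensity (stdDensity n) := by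
  rw [_root_.stdGaussian]
  have h1 : (fun _ : Fin n => gaussianReal 0 1)
      = fun _ : Fin n => (volume : Measure ℝ).withDensity (gaussianPDF 0 1) := by
    funext i; exact gaussianReal_of_var_ne_zero 0 one_ne_zero
  have hsf : SigmaFinite ((volume : Measure ℝ).withDensity (gaussianPDF 0 1)) := by
    rw [← gaussianReal_of_var_ne_zero 0 one_ne_zero]; infer_instance
  rw [h1, pi_withDensity _ (measurable_gaussianPDF 0 1)]
  have h2 : (fun x : Fin n → ℝ => ∏ i, gaussianPDF 0 1 (x i))
      = stdDensity n ∘ ⇑(MeasurableEquiv.toLp 2 (Fin n → ℝ)) := rfl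
  rw [h2, ← volume_pi, map_withDensity_equiv (volume : Measure (Fin n → ℝ))
      (MeasurableEquiv.toLp 2 (Fin n → ℝ)) (stdDensity n) (stdDensity_measurable n),
    (show MeasurePreserving (MeasurableEquiv.toLp 2 (Fin n → ℝ)) volume volume from
      (EuclideanSpace.volume_preserving_symm_measurableEquiv_toLp (Fin n)).symm
      (MeasurableEquiv.toLp 2 (Fin n → ℝ)).symm).map_eq]

lemma stdGaussian_map_isometry {n : ℕ}
    (L : EuclideanSpace ℝ (Fin n) ≃ₗᵢ[ℝ] EuclideanSpace ℝ (Fin n))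
    (hL : Measure.map ⇑L (volume : Measure (EuclideanSpace ℝ (Fin n))) = volume) :
    (stdGaussian n).map ⇑L = stdGaussian n := by
  set ψ : EuclideanSpace ℝ (Fin n) ≃ᵐ EuclideanSpace ℝ (Fin n) :=
    L.toHomeomorph.toMeasurableEquiv with hψdef
  have hψ : ⇑ψ = ⇑L := rfl
  have hdens : stdDensity n ∘ ⇑ψ = stdDensity n := by
    funext x
    simp only [Function.comp_apply, hψ, stdDensity_apply, L.norm_map]
  calc (stdGaussian n).map ⇑L
      = ((volume : Measure (EuclideanSpace ℝ (Fin n))).withDensity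
          (stdDensity n ∘ ⇑ψ)).map ⇑ψ := by
        rw [hdens, hψ, ← stdGaussian_eq_withDensity]
    _ = ((volume : Measure (EuclideanSpace ℝ (Fin n))).map ⇑ψ).withDensity (stdDensity n) :=
        map_withDensity_equiv volume ψ (stdDensity n) (stdDensity_measurable n)
    _ = stdGaussian n := by rw [hψ, hL, ← stdGaussian_eq_withDensity]

end GaussianInvariance

/-- The paper's Theorem 1: if every `G ∈ 𝒢` is a bijective, Lebesgue-measure-preserving isometry
of `ℝⁿ`, the homothety condition holds, and `μ₀` is `𝒢`-invariant, then the law of the diffused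
marginal `α • X₀ + σ • ε` is `𝒢`-invariant. -/
theorem diffused_marginal_invariant {n : ℕ} (hn : 1 ≤ n)
    (𝒢 : Set (EuclideanSpace ℝ (Fin n) → EuclideanSpace ℝ (Fin n)))
    (hbij : ∀ G ∈ 𝒢, Function.Bijective G)
    (hiso : ∀ G ∈ 𝒢, ∀ x y, ‖G x - G y‖ = ‖x - y‖)
    (hvol : ∀ G ∈ 𝒢, Measure.map G (volume : Measure (EuclideanSpace ℝ (Fin n))) = volume)
    (hhom : ∀ G ∈ 𝒢, ∀ a : ℝ, 0 < a → a < 1 → ∃ H ∈ 𝒢, ∀ x, H (a • x) = a • G x)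
    (μ₀ : Measure (EuclideanSpace ℝ (Fin n))) [IsProbabilityMeasure μ₀]
    (hμinv : ∀ G ∈ 𝒢, μ₀.map G = μ₀)
    {Ω : Type} [MeasureSpace Ω] [IsProbabilityMeasure (ℙ : Measure Ω)]
    (X₀ ε : Ω → EuclideanSpace ℝ (Fin n))
    (hX₀ : Measurable X₀) (hε : Measurable ε)
    (hlawX₀ : Measure.map X₀ ℙ = μ₀)
    (hlawε : Measure.map ε ℙ = stdGaussian n)
    (hindep : IndepFun X₀ ε ℙ)
    (α σ : ℝ) (hα0 : 0 < α) (hα1 : α ≤ 1) (hσ : 0 < σ) :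
    ∀ G ∈ 𝒢,
      (Measure.map (fun ω => α • X₀ ω + σ • ε ω) ℙ).map G
        = Measure.map (fun ω => α • X₀ ω + σ • ε ω) ℙ := by
  intro G hG
  have hisoG : Isometry G := Isometry.of_dist_eq fun x y => by
    rw [dist_eq_norm, dist_eq_norm, hiso G hG]
  let eG : EuclideanSpace ℝ (Fin n) ≃ᵢ EuclideanSpace ℝ (Fin n) := ⟨Equiv.ofBijective G (hbij G hG), hisoG⟩
  set L := eG.toRealLinearIsometryEquiv with hLdef
  have hGL : ∀ x, G x = L x + G 0 := by
    intro x
    have := eG.toRealLinearIsometryEquiv_apply x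
    have heG : ∀ z, eG z = G z := fun z => rfl
    rw [heG, heG] at this
    rw [this]
    abel
  have hGmeas : Measurable G := hisoG.continuous.measurable
  have hLmeas : Measurable ⇑L := L.continuous.measurable
  -- the linear part preserves Lebesgue measure
  have hLvol : Measure.map ⇑L (volume : Measure (EuclideanSpace ℝ (Fin n))) = volume := by
    have hcoe : ⇑L = (fun y : EuclideanSpace ℝ (Fin n) => y + -(G 0)) ∘ G := by
      funext x
      simp only [Function.comp_apply]
      rw [hGL x]
      abel
    rw [hcoe, ← Measure.map_map (measurable_add_const _) hGmeas, hvol G hG,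
      map_add_right_eq_self volume _]
  have hgauss : (stdGaussian n).map ⇑L = stdGaussian n := stdGaussian_map_isometry L hLvol
  -- Claim A : the law of `α • x` is preserved by `x ↦ G (α • x)`
  have claimA : Measure.map (fun x : EuclideanSpace ℝ (Fin n) => G (α • x)) μ₀
      = Measure.map (fun x : EuclideanSpace ℝ (Fin n) => α • x) μ₀ := by
    rcases eq_or_lt_of_le hα1 with h1 | h1
    · subst h1
      simp only [one_smul]
      rw [hμinv G hG, Measure.map_id']
    · -- α < 1 : first show `G 0 = 0`
      have key : ∀ a : ℝ, 0 < a → a < 1 →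
          Measure.map (fun y : EuclideanSpace ℝ (Fin n) => L y + a • G 0) μ₀ = μ₀ := by
        intro a ha0 ha1
        obtain ⟨H, hH𝒢, hHa⟩ := hhom G hG a ha0 ha1
        have hHeq : H = fun y : EuclideanSpace ℝ (Fin n) => L y + a • G 0 := by
          funext y
          have hy := hHa (a⁻¹ • y)
          rw [smul_smul, mul_inv_cancel₀ (ne_of_gt ha0), one_smul] at hy
          rw [hy, hGL (a⁻¹ • y), smul_add, L.map_smul, smul_smul,
            mul_inv_cancel₀ (ne_of_gt ha0), one_smul]
        rw [← hHeq]
        exact hμinv H hH𝒢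
      have hc : G 0 = 0 := by
        set ψ : EuclideanSpace ℝ (Fin n) ≃ᵐ EuclideanSpace ℝ (Fin n) :=
          (L.toHomeomorph.trans (Homeomorph.addRight ((4⁻¹ : ℝ) • G 0))).toMeasurableEquiv
          with hψdef
        have hψcoe : ⇑ψ = fun y : EuclideanSpace ℝ (Fin n) => L y + (4⁻¹ : ℝ) • G 0 := rfl
        have h14 : Measure.map ⇑ψ μ₀ = μ₀ := by
          rw [hψcoe]; exact key 4⁻¹ (by norm_num) (by norm_num)
        have hsymm : Measure.map ⇑ψ.symm μ₀ = μ₀ := by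
          conv_lhs => rw [← h14]
          rw [Measure.map_map ψ.symm.measurable ψ.measurable,
            MeasurableEquiv.symm_comp_self, Measure.map_id]
        have h34 : Measure.map (fun y : EuclideanSpace ℝ (Fin n) => y + (2⁻¹ : ℝ) • G 0) μ₀ = μ₀ := by
          have hF34 : Measurable fun y : EuclideanSpace ℝ (Fin n) => L y + (4⁻¹ * 3 : ℝ) • G 0 :=
            hLmeas.add_const _
          have hcomp : (fun y : EuclideanSpace ℝ (Fin n) => y + (2⁻¹ : ℝ) • G 0)
              = (fun y : EuclideanSpace ℝ (Fin n) => L y + (4⁻¹ * 3 : ℝ) • G 0) ∘ ⇑ψ.symm := by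
            funext y
            have hy : L (ψ.symm y) + (4⁻¹ : ℝ) • G 0 = y := by
              have := ψ.apply_symm_apply y
              rwa [hψcoe] at this
            simp only [Function.comp_apply]
            set w := ψ.symm y with hw
            rw [← hy, add_assoc, ← add_smul]
            norm_num
          rw [hcomp, ← Measure.map_map hF34 ψ.symm.measurable, hsymm,
            key (4⁻¹ * 3) (by norm_num) (by norm_num)]
        have := eq_zero_of_map_add_eq μ₀ h34
        rcases smul_eq_zero.mp this with h | h
        · norm_num at h
        · exact h
      have hGsm : (fun x : EuclideanSpace ℝ (Fin n) => G (α • x)) = (fun x : EuclideanSpace ℝ (Fin n) => α • x) ∘ G := by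
        funext x
        simp only [Function.comp_apply]
        rw [hGL (α • x), hGL x, hc, add_zero, add_zero, L.map_smul]
      rw [hGsm, ← Measure.map_map (measurable_const_smul α) hGmeas, hμinv G hG]
  -- assemble
  have hSmeas : Measurable fun ω => α • X₀ ω + σ • ε ω :=
    (hX₀.const_smul α).add (hε.const_smul σ)
  rw [Measure.map_map hGmeas hSmeas]
  have hpt : (G ∘ fun ω => α • X₀ ω + σ • ε ω)
      = fun ω => G (α • X₀ ω) + σ • L (ε ω) := by
    funext ω
    simp only [Function.comp_apply]
    rw [hGL (α • X₀ ω + σ • ε ω), hGL (α • X₀ ω)]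
    simp only [map_add, LinearIsometryEquiv.map_smul]
    abel
  rw [hpt]
  have hlaw_add : ∀ (A B A' B' : Ω → EuclideanSpace ℝ (Fin n)), Measurable A → Measurable B →
      Measurable A' → Measurable B' →
      IndepFun A B ℙ → IndepFun A' B' ℙ →
      Measure.map A ℙ = Measure.map A' ℙ → Measure.map B ℙ = Measure.map B' ℙ →
      Measure.map (fun ω => A ω + B ω) ℙ = Measure.map (fun ω => A' ω + B' ω) ℙ := by
    intro A B A' B' hA hB hA' hB' hAB hAB' hlA hlB
    have h1 : (fun ω => A ω + B ω) = (fun p : EuclideanSpace ℝ (Fin n) × EuclideanSpace ℝ (Fin n) => p.1 + p.2) ∘ (fun ω => (A ω, B ω)) := rfl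
    have h2 : (fun ω => A' ω + B' ω) = (fun p : EuclideanSpace ℝ (Fin n) × EuclideanSpace ℝ (Fin n) => p.1 + p.2) ∘ (fun ω => (A' ω, B' ω)) := rfl
    rw [h1, h2,
      ← Measure.map_map (g := fun p : EuclideanSpace ℝ (Fin n) × EuclideanSpace ℝ (Fin n) => p.1 + p.2) (measurable_fst.add measurable_snd) (hA.prodMk hB),
      ← Measure.map_map (g := fun p : EuclideanSpace ℝ (Fin n) × EuclideanSpace ℝ (Fin n) => p.1 + p.2) (measurable_fst.add measurable_snd) (hA'.prodMk hB'),
      (indepFun_iff_map_prod_eq_prod_map_map hA.aemeasurable hB.aemeasurable).mp hAB,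
      (indepFun_iff_map_prod_eq_prod_map_map hA'.aemeasurable hB'.aemeasurable).mp hAB',
      hlA, hlB]
  refine hlaw_add _ _ _ _ (hGmeas.comp (hX₀.const_smul α))
    ((hLmeas.comp hε).const_smul σ) (hX₀.const_smul α) (hε.const_smul σ)
    (hindep.comp (hGmeas.comp (measurable_const_smul α)) (measurable_const_smul σ |>.comp hLmeas))
    (hindep.comp (measurable_const_smul α) (measurable_const_smul σ)) ?_ ?_
  · -- law of G (α • X₀)
    have hmA : Measurable fun x : EuclideanSpace ℝ (Fin n) => G (α • x) :=
      hGmeas.comp (measurable_const_smul α)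
    calc Measure.map (fun ω => G (α • X₀ ω)) ℙ
        = (Measure.map X₀ ℙ).map (fun x => G (α • x)) := (Measure.map_map hmA hX₀).symm
      _ = Measure.map (fun x => α • x) μ₀ := by rw [hlawX₀, claimA]
      _ = (Measure.map X₀ ℙ).map (fun x => α • x) := by rw [hlawX₀]
      _ = Measure.map (fun ω => α • X₀ ω) ℙ := Measure.map_map (measurable_const_smul α) hX₀
  · -- law of σ • L ε
    calc Measure.map (fun ω => σ • L (ε ω)) ℙ
        = (Measure.map (fun ω => L (ε ω)) ℙ).map (fun x => σ • x) :=
          (Measure.map_map (measurable_const_smul σ) (hLmeas.comp hε)).symm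
      _ = ((Measure.map ε ℙ).map ⇑L).map (fun x => σ • x) := by
          rw [Measure.map_map hLmeas hε]; rfl
      _ = (Measure.map ε ℙ).map (fun x => σ • x) := by rw [hlawε, hgauss]
      _ = Measure.map (fun ω => σ • ε ω) ℙ := Measure.map_map (measurable_const_smul σ) hε
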